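/- If the influence graph of a Boolean network f on finitely many variables has no negative cycle, then every attractor of the asynchronous state transition graph of f is a fixed point (there are no cyclic attractors). -/

import Mathlib

/-- Three truth values: false, unknown, true. -/
inductive TV3 | fls | unk | tru
  deriving DecidableEq

namespace TV3

def toFin : TV3 → Fin 3
  | fls => 0 | unk => 1 | tru => 2

/-- The truth order f < u < t. -/
instance : LinearOrder TV3 :=
  LinearOrder.lift' toFin (by intro a b h; cases a <;> cases b <;> simp_all [toFin])

instance : BoundedOrder TV3 where
  top := tru
  bot := fls
  le_top x := by cases x <;> decide
  bot_le x := by cases x <;> decide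

/-- Kleene negation. -/
def neg : TV3 → TV3 | fls => tru | unk => unk | tru => fls

end TV3

def ofBool : Bool → TV3 | true => .tru | false => .fls

/-- The subset order on truth values: f <ₛ u and t <ₛ u. -/
def leS (x y : TV3) : Prop := x = y ∨ y = TV3.unk

section LP

variable {A : Type*} [Fintype A] [DecidableEq A]

/-- Pointwise subset order on 3-valued interpretations. -/
def leSI (I₁ I₂ : A → TV3) : Prop := ∀ a, leS (I₁ a) (I₂ a)

/-- The set of 2-valued interpretations compatible with a 3-valued one. -/
def gamma (I : A → TV3) : Set (A → Bool) :=
  {J | ∀ a, I a ≠ TV3.unk → ofBool (J a) = I a}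

/-- A ground normal rule: head ← pos, ∼neg. -/
structure Rule (A : Type*) where
  head : A
  pos : Finset A
  neg : Finset A
  deriving DecidableEq

/-- A finite ground normal logic program. -/
abbrev Program (A : Type*) [DecidableEq A] := Finset (Rule A)

/-- Immediate consequence operator T_P. -/
def TP (P : Program A) (J : A → Bool) (a : A) : Bool :=
  decide (∃ r ∈ P, r.head = a ∧ (∀ p ∈ r.pos, J p = true) ∧ (∀ q ∈ r.neg, J q = false))

/-- 2-valued value of the body formula of a rule. -/
noncomputable def bodyVal2 (r : Rule A) (s : A → Bool) : Bool :=
  (r.pos.inf s) && !(r.neg.sup s)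

/-- The Boolean network encoding of a program: f_v = ⋁_{head r = v} body-formula(r). -/
noncomputable def encBN (P : Program A) : A → (A → Bool) → Bool :=
  fun v s => P.sup fun r => if r.head = v then bodyVal2 r s else false

/-- 3-valued (Kleene) value of the body formula of a rule. -/
def bodyVal3 (r : Rule A) (I : A → TV3) : TV3 :=
  (r.pos.inf I) ⊓ (r.neg.inf fun q => TV3.neg (I q))

/-- 3-valued evaluation of rhs(a), the disjunction of bodies of rules with head a. -/
def rhs3 (P : Program A) (I : A → TV3) (a : A) : TV3 :=
  P.sup fun r => if r.head = a then bodyVal3 r I else TV3.fls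

/-- Signs of arcs. -/
inductive Sign | pos | neg
  deriving DecidableEq

/-- A signed directed graph on A. -/
abbrev SGraph (A : Type*) := A → A → Sign → Prop

def posArc (P : Program A) (u v : A) : Prop := ∃ r ∈ P, r.head = v ∧ u ∈ r.pos
def negArc (P : Program A) (u v : A) : Prop := ∃ r ∈ P, r.head = v ∧ u ∈ r.neg

/-- Dependency graph of a program. -/
def dg (P : Program A) : SGraph A := fun u v s =>
  match s with
  | Sign.pos => posArc P u v
  | Sign.neg => negArc P u v

/-- Influence graph of a Boolean network. -/
def ig (f : A → (A → Bool) → Bool) : SGraph A := fun u v s =>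
  match s with
  | Sign.pos => ∃ x : A → Bool, f v (Function.update x u false) < f v (Function.update x u true)
  | Sign.neg => ∃ x : A → Bool, f v (Function.update x u true) < f v (Function.update x u false)

/-- A (closed signed) cycle in a signed graph: vertices v₀,…,vₙ with arcs
vᵢ → vᵢ₊₁ (indices mod n+1) carrying the given signs. -/
structure SCycle (G : SGraph A) where
  n : ℕ
  vtx : Fin (n + 1) → A
  sgn : Fin (n + 1) → Sign
  arc : ∀ i, G (vtx i) (vtx (i + 1)) (sgn i)

/-- A cycle is negative if it has an odd number of negative arcs. -/
def SCycle.IsNeg {G : SGraph A} (c : SCycle G) : Prop :=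
  (Finset.univ.filter fun i => c.sgn i = Sign.neg).card % 2 = 1

/-- A cycle is positive if it has an even number of negative arcs. -/
def SCycle.IsPos {G : SGraph A} (c : SCycle G) : Prop :=
  (Finset.univ.filter fun i => c.sgn i = Sign.neg).card % 2 = 0

/-- U is a positive feedback vertex set: it meets every positive cycle. -/
def IsPFVS (G : SGraph A) (U : Finset A) : Prop :=
  ∀ c : SCycle G, c.IsPos → ∃ i, c.vtx i ∈ U

/-- P is tight: its positive dependency graph is acyclic. -/
def Tight (P : Program A) : Prop :=
  IsEmpty (SCycle (fun u v s => s = Sign.pos ∧ posArc P u v))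

/-- Synchronous update of a Boolean network. -/
def syncNext (f : A → (A → Bool) → Bool) (x : A → Bool) : A → Bool := fun v => f v x

/-- Fully asynchronous transition. -/
def asyncStep (f : A → (A → Bool) → Bool) (x y : A → Bool) : Prop :=
  ∃ v, f v x ≠ x v ∧ y = Function.update x v (f v x)

/-- Nonempty trap set of the asynchronous state transition graph. -/
def IsTrapSet (f : A → (A → Bool) → Bool) (S : Set (A → Bool)) : Prop :=
  S.Nonempty ∧ ∀ x ∈ S, ∀ y, asyncStep f x y → y ∈ S

/-- Attractor: subset-minimal nonempty trap set. -/
def IsAttractor (f : A → (A → Bool) → Bool) (S : Set (A → Bool)) : Prop :=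
  IsTrapSet f S ∧ ∀ T, IsTrapSet f T → T ⊆ S → T = S

def IsFixedPoint (f : A → (A → Bool) → Bool) (x : A → Bool) : Prop :=
  syncNext f x = x

/-- Trap space of a BN under synchronous update. -/
def IsSyncTrapSpace (f : A → (A → Bool) → Bool) (m : A → TV3) : Prop :=
  ∀ s ∈ gamma m, syncNext f s ∈ gamma m

/-- Trap space of a BN under asynchronous update. -/
def IsAsyncTrapSpace (f : A → (A → Bool) → Bool) (m : A → TV3) : Prop :=
  ∀ s ∈ gamma m, ∀ y, asyncStep f s y → y ∈ gamma m

/-- Supported trap space: γ(I) is closed under T_P. -/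
def IsSuppTrapSpace (P : Program A) (I : A → TV3) : Prop :=
  ∀ J ∈ gamma I, TP P J ∈ gamma I

/-- Supported partial model: 3-valued model of Clark's completion. -/
def IsSuppPartialModel (P : Program A) (I : A → TV3) : Prop :=
  ∀ a, I a = rhs3 P I a

/-- The 3-valued one-step operator of the Przymusinski reduct P^I applied to K:
negative literals are evaluated under I (Kleene negation), positive ones under K. -/
def Phi (P : Program A) (I K : A → TV3) (a : A) : TV3 :=
  P.sup fun r =>
    if r.head = a then (r.pos.inf K) ⊓ (r.neg.inf fun q => TV3.neg (I q)) else TV3.fls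

/-- Stable partial model: I is the ≤ₜ-least 3-valued model of the reduct P^I. -/
def IsStablePartial (P : Program A) (I : A → TV3) : Prop :=
  (∀ a, Phi P I I a ≤ I a) ∧
    ∀ K : A → TV3, (∀ a, Phi P I K a ≤ K a) → ∀ a, I a ≤ K a

/-- Regular model: ≤ₛ-minimal stable partial model. -/
def IsRegularModel (P : Program A) (I : A → TV3) : Prop :=
  IsStablePartial P I ∧ ∀ I', IsStablePartial P I' → leSI I' I → I' = I

def Is2Valued (I : A → TV3) : Prop := ∀ a, I a ≠ TV3.unk

/-- The one-step operator of the Gelfond–Lifschitz reduct P^J applied to K. -/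
noncomputable def PhiB (P : Program A) (J K : A → Bool) (a : A) : Bool :=
  P.sup fun r =>
    if r.head = a then ((r.pos.inf K) && !(r.neg.sup J)) else false

/-- Stable model: J is the least model of the Gelfond–Lifschitz reduct P^J. -/
def IsStableModel (P : Program A) (J : A → Bool) : Prop :=
  (∀ a, PhiB P J J a ≤ J a) ∧
    ∀ K : A → Bool, (∀ a, PhiB P J K a ≤ K a) → ∀ a, J a ≤ K a

/-- Every cycle of dg(P) contains no negative arc. -/
def LocallyStratified (P : Program A) : Prop :=
  ∀ c : SCycle (dg P), ∀ i, c.sgn i ≠ Sign.neg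

def NoNegCycle (G : SGraph A) : Prop := ∀ c : SCycle G, ¬ c.IsNeg
def NoPosCycle (G : SGraph A) : Prop := ∀ c : SCycle G, ¬ c.IsPos

end LP
set_option linter.unusedSectionVars false
section Walks
variable {A : Type*} [Fintype A] [DecidableEq A]

/-- Walks in a signed graph carrying the parity of negative arcs. -/
inductive PW (G : SGraph A) : A → A → Bool → Prop
  | refl (a : A) : PW G a a false
  | cons {a b c : A} {s : Sign} {p : Bool} :
      G a b s → PW G b c p → PW G a c (xor (decide (s = Sign.neg)) p)

theorem PW.trans {G : SGraph A} {a b c : A} {p q : Bool}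
    (h1 : PW G a b p) (h2 : PW G b c q) : PW G a c (xor p q) := by
  induction h1 with
  | refl a => simpa using h2
  | cons harc _ ih =>
      have := PW.cons harc (ih h2)
      simpa [Bool.xor_assoc] using this

theorem PW.single {G : SGraph A} {a b : A} {s : Sign} (h : G a b s) :
    PW G a b (decide (s = Sign.neg)) := by
  simpa using PW.cons h (PW.refl b)

/-- Walk data in reversed indexing: F 0 = end, F m = start. -/
theorem PW.toData {G : SGraph A} {a b : A} {p : Bool} (h : PW G a b p) :
    ∃ (m : ℕ) (F : ℕ → A) (S : ℕ → Sign), F 0 = b ∧ F m = a ∧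
      (∀ i < m, G (F (i + 1)) (F i) (S i)) ∧
      ((Finset.range m).filter (fun i => S i = Sign.neg)).card % 2
        = (if p then 1 else 0) := by
  induction h with
  | refl a =>
      exact ⟨0, fun _ => a, fun _ => Sign.pos, rfl, rfl, by omega, by simp⟩
  | @cons a b c s p harc hw ih =>
      obtain ⟨m, F, S, hF0, hFm, harcs, hpar⟩ := ih
      refine ⟨m + 1, fun i => if i = m + 1 then a else F i,
        fun i => if i = m then s else S i, by simp [hF0], by simp, ?_, ?_⟩
      · intro i hi
        rcases Nat.lt_or_ge i m with h' | h'
        · have h1 : i + 1 ≠ m + 1 := by omega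
          have h2 : i ≠ m + 1 := by omega
          have h3 : i ≠ m := by omega
          simpa [h1, h2, h3] using harcs i h'
        · have : i = m := by omega
          subst this
          simpa [hFm] using harc
      · have hsplit : ((Finset.range (m+1)).filter
            (fun i => (if i = m then s else S i) = Sign.neg)).card
            = ((Finset.range m).filter (fun i => S i = Sign.neg)).card
              + (if s = Sign.neg then 1 else 0) := by
          rw [Finset.range_add_one, Finset.filter_insert,
            show (if m = m then s else S m) = s from if_pos rfl]
          have hcong : (Finset.range m).filter
              (fun i => (if i = m then s else S i) = Sign.neg)
              = (Finset.range m).filter (fun i => S i = Sign.neg) := by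
            apply Finset.filter_congr
            intro i hi
            simp only [Finset.mem_range] at hi
            simp [Nat.ne_of_lt hi]
          by_cases hs : s = Sign.neg
          · rw [if_pos hs, Finset.card_insert_of_notMem (by simp), hcong]
            simp [hs]
          · rw [if_neg hs, hcong]; simp [hs]
        rw [hsplit]
        rcases p with _ | _ <;> rcases hs : decide (s = Sign.neg) with _ | _ <;>
          simp_all <;> omega
end Walks
section NoOdd
variable {A : Type*} [Fintype A] [DecidableEq A]

theorem noNegCycle_no_odd_closed {G : SGraph A} (hNN : NoNegCycle G) (a : A) :
    ¬ PW G a a true := by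
  intro h
  obtain ⟨m, F, S, hF0, hFm, harcs, hpar⟩ := h.toData
  rcases m with _ | k
  · simp at hpar
  · set vtx : Fin (k + 1) → A := fun i => F (k + 1 - i.val) with hvtx
    set sgn : Fin (k + 1) → Sign := fun i => S (k - i.val) with hsgn
    have harc : ∀ i : Fin (k + 1), G (vtx i) (vtx (i + 1)) (sgn i) := by
      intro i
      rcases Nat.lt_or_ge i.val k with hik | hik
      · have hval : ((i + 1 : Fin (k + 1))).val = i.val + 1 := by
          simp [Fin.add_def, Nat.mod_eq_of_lt (by omega : i.val + 1 < k + 1)]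
        have h1 : k - i.val + 1 = k + 1 - i.val := by omega
        have h2 : k + 1 - (i.val + 1) = k - i.val := by omega
        have := harcs (k - i.val) (by omega)
        rw [h1] at this
        simpa [hvtx, hsgn, hval, h2] using this
      · have hik' : i.val = k := by omega
        have hval : ((i + 1 : Fin (k + 1))).val = 0 := by
          simp [Fin.add_def, hik']
        have h0 := harcs 0 (by omega)
        rw [show F 0 = F (k + 1) from hF0.trans hFm.symm] at h0
        simpa [hvtx, hsgn, hval, hik'] using h0
    have hcard : (Finset.univ.filter fun i : Fin (k + 1) => sgn i = Sign.neg).card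
        = ((Finset.range (k + 1)).filter fun i => S i = Sign.neg).card := by
      apply Finset.card_nbij' (fun i => k - (i : Fin (k+1)).val)
        (fun j => (⟨k - j, by omega⟩ : Fin (k + 1)))
      · intro i hi
        simp only [Finset.coe_filter, Set.mem_setOf_eq, Finset.mem_filter, Finset.mem_univ, true_and, hsgn] at hi
        simp [Finset.mem_filter, Finset.mem_range, hi]
      · intro j hj
        simp only [Finset.coe_filter, Set.mem_setOf_eq, Finset.mem_filter, Finset.mem_range] at hj
        simp only [Finset.coe_filter, Set.mem_setOf_eq, Finset.mem_filter, Finset.mem_univ, true_and, hsgn]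
        have : k - (k - j) = j := by omega
        rw [this]; exact hj.2
      · intro i _
        apply Fin.ext
        simp
        omega
      · intro j hj
        simp only [Finset.coe_filter, Set.mem_setOf_eq, Finset.mem_filter, Finset.mem_range] at hj
        simp
        omega
    have : NoNegCycle G := hNN
    exact this ⟨k, vtx, sgn, harc⟩ (by
      show _ % 2 = 1
      simp only [hcard]
      simpa using hpar)
end NoOdd
section Sigma
variable {A : Type*} [Fintype A] [DecidableEq A]

def RW (G : SGraph A) (u v : A) : Prop := ∃ p, PW G u v p

theorem RW.refl' {G : SGraph A} (a : A) : RW G a a := ⟨false, PW.refl a⟩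

theorem RW.trans' {G : SGraph A} {a b c : A} (h1 : RW G a b) (h2 : RW G b c) :
    RW G a c := by
  obtain ⟨p, hp⟩ := h1; obtain ⟨q, hq⟩ := h2; exact ⟨_, hp.trans hq⟩

def sccSetoid (G : SGraph A) : Setoid A :=
  ⟨fun u v => RW G u v ∧ RW G v u,
    fun a => ⟨RW.refl' a, RW.refl' a⟩,
    fun h => ⟨h.2, h.1⟩,
    fun h1 h2 => ⟨h1.1.trans' h2.1, h2.2.trans' h1.2⟩⟩

theorem parity_unique {G : SGraph A} (hNN : ∀ a, ¬ PW G a a true)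
    {u v : A} {p q : Bool} (h1 : PW G u v p) (h2 : PW G u v q)
    (hback : RW G v u) : p = q := by
  obtain ⟨r, hr⟩ := hback
  have c1 : ¬ (xor p r = true) := fun hc => hNN u (by rw [← hc]; exact h1.trans hr)
  have c2 : ¬ (xor q r = true) := fun hc => hNN u (by rw [← hc]; exact h2.trans hr)
  rcases p <;> rcases q <;> rcases r <;> simp_all

theorem sig_exists (G : SGraph A) (v : A) :
    ∃ p, PW G (Quotient.mk (sccSetoid G) v).out v p := by
  have hrel : (sccSetoid G).r (Quotient.mk (sccSetoid G) v).out v :=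
    Quotient.exact (Quotient.out_eq (Quotient.mk (sccSetoid G) v))
  exact hrel.1

noncomputable def sig (G : SGraph A) : A → Bool := fun v => (sig_exists G v).choose

theorem sig_spec (G : SGraph A) (v : A) :
    PW G (Quotient.mk (sccSetoid G) v).out v (sig G v) :=
  (sig_exists G v).choose_spec

theorem sig_arc {G : SGraph A} (hNN : ∀ a, ¬ PW G a a true)
    {u v : A} {s : Sign} (harc : G u v s) (hback : RW G v u) :
    decide (s = Sign.neg) = xor (sig G u) (sig G v) := by
  have hrel : (sccSetoid G).r u v := ⟨⟨_, PW.single harc⟩, hback⟩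
  have hq : Quotient.mk (sccSetoid G) u = Quotient.mk (sccSetoid G) v :=
    Quotient.sound hrel
  have w1 : PW G (Quotient.mk (sccSetoid G) v).out v
      (xor (sig G u) (decide (s = Sign.neg))) := by
    have := (sig_spec G u).trans (PW.single harc)
    rwa [hq] at this
  have w2 := sig_spec G v
  have hvrep : RW G v (Quotient.mk (sccSetoid G) v).out := by
    have hrel2 : (sccSetoid G).r (Quotient.mk (sccSetoid G) v).out v :=
      Quotient.exact (Quotient.out_eq _)
    exact hrel2.2
  have := parity_unique hNN w1 w2 hvrep
  rcases hs : sig G u <;> rcases hv : sig G v <;> simp_all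
end Sigma
section ArcLemmas
variable {A : Type*} [Fintype A] [DecidableEq A]

theorem arc_of_flip {g : A → (A → Bool) → Bool} {u v : A} {x : A → Bool}
    (h : g v (Function.update x u false) ≠ g v (Function.update x u true)) :
    ∃ s, ig g u v s := by
  rcases h0 : g v (Function.update x u false) <;>
    rcases h1 : g v (Function.update x u true)
  · exact absurd (h0.trans h1.symm) h
  · exact ⟨Sign.pos, x, by rw [h0, h1]; decide⟩
  · exact ⟨Sign.neg, x, by rw [h0, h1]; decide⟩
  · exact absurd (h0.trans h1.symm) h

theorem flip_eq_of_no_arc {g : A → (A → Bool) → Bool} {u v : A}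
    (h : ∀ s, ¬ ig g u v s) (x : A → Bool) (b : Bool) :
    g v (Function.update x u b) = g v x := by
  have key : g v (Function.update x u false) = g v (Function.update x u true) := by
    by_contra hc
    obtain ⟨s, hs⟩ := arc_of_flip hc
    exact h s hs
  have hx : g v x = g v (Function.update x u (x u)) := by
    rw [Function.update_eq_self]
  rcases hb : x u <;> rcases b
  · rw [hx, hb]
  · rw [hx, hb]; exact key.symm
  · rw [hx, hb]; exact key
  · rw [hx, hb]

/-- If g v differs on x and y, some coordinate where they differ has an arc to v. -/
theorem exists_arc_of_ne {g : A → (A → Bool) → Bool} {v : A} :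
    ∀ (D : Finset A) (x y : A → Bool), (∀ u, x u ≠ y u → u ∈ D) →
      g v x ≠ g v y → ∃ u s, x u ≠ y u ∧ ig g u v s := by
  intro D
  induction D using Finset.induction with
  | empty =>
      intro x y hD hne
      have hxy : x = y := by
        funext u; by_contra hc; exact absurd (hD u hc) (Finset.notMem_empty u)
      exact absurd (congrArg (g v) hxy) hne
  | @insert a D' ha ih =>
      intro x y hD hne
      by_cases hxa : x a = y a
      · refine ih x y (fun u hu => ?_) hne
        rcases Finset.mem_insert.mp (hD u hu) with h | h
        · exact absurd (h ▸ hxa) hu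
        · exact h
      · by_cases h1 : g v x = g v (Function.update y a (x a))
        · have h2 : g v (Function.update y a (x a)) ≠ g v y :=
            fun hc => hne (h1.trans hc)
          have harc : ∃ s, ig g a v s := by
            apply arc_of_flip (x := y) (u := a) (v := v) (g := g)
            rcases hb : y a <;> rcases hxb : x a
            · exact absurd (hxb.trans hb.symm) hxa
            · have e1 : Function.update y a false = y := by
                rw [← hb]; exact Function.update_eq_self a y
              have e2 : Function.update y a true = Function.update y a (x a) := by
                rw [hxb]
              rw [e1, e2]; exact fun hc => h2 hc.symm
            · have e1 : Function.update y a true = y := by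
                rw [← hb]; exact Function.update_eq_self a y
              have e2 : Function.update y a false = Function.update y a (x a) := by
                rw [hxb]
              rw [e1, e2]; exact h2
            · exact absurd (hxb.trans hb.symm) hxa
          obtain ⟨s, hs⟩ := harc
          exact ⟨a, s, hxa, hs⟩
        · obtain ⟨u, s, hu, hs⟩ := ih x (Function.update y a (x a)) (fun u hu => by
            by_cases hua : u = a
            · subst hua; rw [Function.update_self] at hu; exact absurd rfl hu
            · rw [Function.update_of_ne hua] at hu
              rcases Finset.mem_insert.mp (hD u hu) with h | h
              · exact absurd h hua
              · exact h) h1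
          have hua : u ≠ a := by
            intro hc; subst hc; rw [Function.update_self] at hu; exact hu rfl
          rw [Function.update_of_ne hua] at hu
          exact ⟨u, s, hu, hs⟩

/-- No negative arc into v makes g v monotone. -/
theorem mono_of_no_neg_arc {g : A → (A → Bool) → Bool} {v : A}
    (h : ∀ u, ¬ ig g u v Sign.neg) :
    ∀ (D : Finset A) (x y : A → Bool), (∀ u, x u ≠ y u → u ∈ D) →
      (∀ u, x u ≤ y u) → g v x ≤ g v y := by
  intro D
  induction D using Finset.induction with
  | empty =>
      intro x y hD hle
      have hxy : x = y := by
        funext u; by_contra hc; exact absurd (hD u hc) (Finset.notMem_empty u)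
      rw [hxy]
  | @insert a D' ha ih =>
      intro x y hD hle
      by_cases hxa : x a = y a
      · refine ih x y (fun u hu => ?_) hle
        rcases Finset.mem_insert.mp (hD u hu) with h | h
        · exact absurd (h ▸ hxa) hu
        · exact h
      · have hlea := hle a
        have hxf : x a = false := by
          rcases hb : x a
          · rfl
          · exfalso
            rcases hb' : y a
            · rw [hb, hb'] at hlea; exact absurd hlea (by decide)
            · exact hxa (hb.trans hb'.symm)
        have hyt : y a = true := by
          rcases hb' : y a
          · exact absurd (hxf.trans hb'.symm) hxa
          · rfl
        have step1 : g v x ≤ g v (Function.update x a true) := by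
          by_contra hc
          have h1 : g v x = true := by
            rcases hb : g v x
            · rw [hb] at hc; exact absurd (by exact Bool.false_le _) hc
            · rfl
          have h2 : g v (Function.update x a true) = false := by
            rcases hb : g v (Function.update x a true)
            · rfl
            · rw [hb] at hc; exact absurd (by exact Bool.le_true _) hc
          apply h a
          refine ⟨x, ?_⟩
          have hxx : Function.update x a false = x := by
            rw [← hxf]; exact Function.update_eq_self a x
          show g v (Function.update x a true) < g v (Function.update x a false)
          rw [hxx, h1, h2]; decide
        have step2 : g v (Function.update x a true) ≤ g v y := by
          refine ih (Function.update x a true) y (fun u hu => ?_) (fun u => ?_)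
          · have hua : u ≠ a := by
              intro hc; subst hc
              rw [Function.update_self, hyt] at hu; exact hu rfl
            rw [Function.update_of_ne hua] at hu
            rcases Finset.mem_insert.mp (hD u hu) with h' | h'
            · exact absurd h' hua
            · exact h'
          · by_cases hua : u = a
            · subst hua; rw [Function.update_self, hyt]
            · rw [Function.update_of_ne hua]; exact hle u
        exact le_trans step1 step2

/-- Arcs into a frozen vertex are positive self-loops. -/
theorem frozen_arc {g : A → (A → Bool) → Bool} {v : A}
    (hfroz : ∀ x, g v x = x v) {u : A} {s : Sign} (harc : ig g u v s) :
    u = v ∧ s = Sign.pos := by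
  by_cases huv : u = v
  · subst huv
    refine ⟨rfl, ?_⟩
    rcases s with _ | _
    · rfl
    · obtain ⟨x, hx⟩ := harc
      rw [hfroz, hfroz, Function.update_self, Function.update_self] at hx
      exact absurd hx (by decide)
  · exfalso
    rcases s with _ | _ <;> obtain ⟨x, hx⟩ := harc <;>
      rw [hfroz, hfroz, Function.update_of_ne (Ne.symm huv),
        Function.update_of_ne (Ne.symm huv)] at hx <;>
      exact absurd hx (lt_irrefl _)

/-- If g v depends only on coordinates in W, arcs into v come from W. -/
theorem arc_mem_of_dep {g : A → (A → Bool) → Bool} {v : A} {W : Finset A}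
    (hdep : ∀ x y, (∀ u ∈ W, x u = y u) → g v x = g v y)
    {u : A} {s : Sign} (harc : ig g u v s) : u ∈ W := by
  by_contra hu
  have key : ∀ x : A → Bool,
      g v (Function.update x u false) = g v (Function.update x u true) := by
    intro x
    apply hdep
    intro w hw
    have hwu : w ≠ u := by intro hc; subst hc; exact hu hw
    rw [Function.update_of_ne hwu, Function.update_of_ne hwu]
  rcases s with _ | _ <;> obtain ⟨x, hx⟩ := harc
  · rw [key x] at hx; exact absurd hx (lt_irrefl _)
  · rw [← key x] at hx; exact absurd hx (lt_irrefl _)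
end ArcLemmas
section Dyn
variable {A : Type*} [Fintype A] [DecidableEq A]

def Reach (g : A → (A → Bool) → Bool) : (A → Bool) → (A → Bool) → Prop :=
  Relation.ReflTransGen (asyncStep g)

theorem mem_of_reach {g : A → (A → Bool) → Bool} {S : Set (A → Bool)}
    (htrap : IsTrapSet g S) {x y : A → Bool} (hx : x ∈ S) (h : Reach g x y) :
    y ∈ S := by
  induction h with
  | refl => exact hx
  | tail _ h2 ih => exact htrap.2 _ ih _ h2

theorem attractor_reach {g : A → (A → Bool) → Bool} {S : Set (A → Bool)}
    (hS : IsAttractor g S) {z : A → Bool} (hz : z ∈ S) :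
    ∀ x ∈ S, Reach g z x := by
  have htrap : IsTrapSet g {y | Reach g z y} := by
    refine ⟨⟨z, Relation.ReflTransGen.refl⟩, ?_⟩
    intro x hx y hstep
    exact Relation.ReflTransGen.tail hx hstep
  have hsub : {y | Reach g z y} ⊆ S := fun y hy => mem_of_reach hS.1 hz hy
  have := hS.2 _ htrap hsub
  intro x hx
  rw [← this] at hx
  exact hx

theorem attractor_of_fixed {g : A → (A → Bool) → Bool} {S : Set (A → Bool)}
    (hS : IsAttractor g S) {z : A → Bool} (hz : z ∈ S) (hfix : ∀ v, g v z = z v) :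
    S = {z} ∧ IsFixedPoint g z := by
  have htrap : IsTrapSet g {z} := by
    refine ⟨⟨z, rfl⟩, ?_⟩
    rintro x rfl y ⟨v, hv, _⟩
    exact absurd (hfix v) hv
  have hsub : ({z} : Set (A → Bool)) ⊆ S := by
    intro y hy; rw [Set.mem_singleton_iff] at hy; subst hy; exact hz
  refine ⟨(hS.2 _ htrap hsub).symm, funext fun v => hfix v⟩

variable {g : A → (A → Bool) → Bool} {Good : A → Prop} [DecidablePred Good]

theorem phase1 : ∀ (n : ℕ) (x : A → Bool),
    (Finset.univ.filter fun v => Good v ∧ x v = false).card ≤ n →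
    ∃ y, Reach g x y ∧ ∀ v, Good v → g v y ≤ y v := by
  classical
  intro n
  induction n with
  | zero =>
      intro x hx
      refine ⟨x, Relation.ReflTransGen.refl, fun v hv => ?_⟩
      rcases hb : x v
      · exfalso
        have : v ∈ Finset.univ.filter fun v => Good v ∧ x v = false := by
          simp [hv, hb]
        have := Finset.card_pos.mpr ⟨v, this⟩
        omega
      · exact Bool.le_true _
  | succ n ih =>
      intro x hx
      by_cases hex : ∃ v, Good v ∧ g v x = true ∧ x v = false
      · obtain ⟨v, hv, hgv, hxv⟩ := hex
        have hstep : asyncStep g x (Function.update x v true) := by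
          refine ⟨v, ?_, by rw [hgv]⟩
          rw [hgv, hxv]; decide
        have hcard : (Finset.univ.filter fun w => Good w ∧
            (Function.update x v true) w = false).card ≤ n := by
          have heq : (Finset.univ.filter fun w => Good w ∧
              (Function.update x v true) w = false)
              = (Finset.univ.filter fun w => Good w ∧ x w = false).erase v := by
            ext u
            by_cases huv : u = v
            · subst huv; simp [Function.update_self]
            · simp [Function.update_of_ne huv, huv]
          have hmem : v ∈ Finset.univ.filter fun w => Good w ∧ x w = false := by
            simp [hv, hxv]
          rw [heq, Finset.card_erase_of_mem hmem]
          omega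
        obtain ⟨y, hry, hy⟩ := ih (Function.update x v true) hcard
        exact ⟨y, Relation.ReflTransGen.head hstep hry, hy⟩
      · push_neg at hex
        refine ⟨x, Relation.ReflTransGen.refl, fun v hv => ?_⟩
        rcases hb : g v x
        · exact Bool.false_le _
        · rcases hb' : x v
          · exact absurd (hex v hv hb) (by rw [hb']; decide)
          · exact le_refl _

theorem phase2 (hG2 : ∀ v, Good v → ∀ x y, (∀ u, x u ≤ y u) → g v x ≤ g v y) :
    ∀ (n : ℕ) (x : A → Bool), (∀ v, Good v → g v x ≤ x v) →
    (Finset.univ.filter fun v => Good v ∧ x v = true).card ≤ n →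
    ∃ z, Reach g x z ∧ ∀ v, Good v → g v z = z v := by
  classical
  intro n
  induction n with
  | zero =>
      intro x hinv hx
      refine ⟨x, Relation.ReflTransGen.refl, fun v hv => ?_⟩
      rcases hb : x v
      · have hle := hinv v hv
        rw [hb] at hle
        rcases hb2 : g v x
        · rfl
        · rw [hb2] at hle; exact absurd hle (by decide)
      · exfalso
        have : v ∈ Finset.univ.filter fun v => Good v ∧ x v = true := by
          simp [hv, hb]
        have := Finset.card_pos.mpr ⟨v, this⟩
        omega
  | succ n ih =>
      intro x hinv hx
      by_cases hex : ∃ v, Good v ∧ g v x ≠ x v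
      · obtain ⟨v, hv, hne⟩ := hex
        have hxv : x v = true := by
          rcases hb : x v
          · exfalso
            have hle := hinv v hv
            rw [hb] at hle
            rcases hb2 : g v x
            · exact hne (hb2.trans hb.symm)
            · rw [hb2] at hle; exact absurd hle (by decide)
          · rfl
        have hgv : g v x = false := by
          rcases hb : g v x
          · rfl
          · exact absurd (hb.trans hxv.symm) hne
        have hstep : asyncStep g x (Function.update x v false) := by
          exact ⟨v, hne, by rw [hgv]⟩
        have hle : ∀ u, (Function.update x v false) u ≤ x u := by
          intro u
          by_cases huv : u = v
          · subst huv; rw [Function.update_self]; exact Bool.false_le _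
          · rw [Function.update_of_ne huv]
        have hinv' : ∀ w, Good w → g w (Function.update x v false) ≤
            (Function.update x v false) w := by
          intro w hw
          have h1 : g w (Function.update x v false) ≤ g w x := hG2 w hw _ _ hle
          by_cases hwv : w = v
          · subst hwv
            rw [Function.update_self]
            rw [hgv] at h1
            exact h1
          · rw [Function.update_of_ne hwv]
            exact le_trans h1 (hinv w hw)
        have hcard : (Finset.univ.filter fun w => Good w ∧
            (Function.update x v false) w = true).card ≤ n := by
          have heq : (Finset.univ.filter fun w => Good w ∧
              (Function.update x v false) w = true)
              = (Finset.univ.filter fun w => Good w ∧ x w = true).erase v := by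
            ext u
            by_cases huv : u = v
            · subst huv; simp [Function.update_self]
            · simp [Function.update_of_ne huv, huv]
          have hmem : v ∈ Finset.univ.filter fun w => Good w ∧ x w = true := by
            simp [hv, hxv]
          rw [heq, Finset.card_erase_of_mem hmem]
          omega
        obtain ⟨z, hrz, hz⟩ := ih (Function.update x v false) hinv' hcard
        exact ⟨z, Relation.ReflTransGen.head hstep hrz, hz⟩
      · push_neg at hex
        exact ⟨x, Relation.ReflTransGen.refl, hex⟩

theorem equil_step
    (hG1 : ∀ v, Good v → ∀ x y, (∀ u, Good u → x u = y u) → g v x = g v y)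
    {x y : A → Bool} (hx : ∀ v, Good v → g v x = x v) (hstep : asyncStep g x y) :
    (∀ v, Good v → g v y = y v) ∧ (∀ v, Good v → y v = x v) := by
  obtain ⟨v', hne, rfl⟩ := hstep
  have hv' : ¬ Good v' := fun hc => hne (hx v' hc)
  have hagree : ∀ u, Good u → (Function.update x v' (g v' x)) u = x u := by
    intro u hu
    have huv : u ≠ v' := fun hc => hv' (hc ▸ hu)
    rw [Function.update_of_ne huv]
  refine ⟨fun v hv => ?_, hagree⟩
  rw [hG1 v hv _ x hagree, hx v hv, hagree v hv]

theorem equil_reach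
    (hG1 : ∀ v, Good v → ∀ x y, (∀ u, Good u → x u = y u) → g v x = g v y)
    {z x : A → Bool} (hr : Reach g z x) (hz : ∀ v, Good v → g v z = z v) :
    (∀ v, Good v → g v x = x v) ∧ (∀ v, Good v → x v = z v) := by
  induction hr with
  | refl => exact ⟨hz, fun _ _ => rfl⟩
  | tail h1 h2 ih =>
      obtain ⟨he, ha⟩ := ih
      obtain ⟨he', ha'⟩ := equil_step hG1 he h2
      exact ⟨he', fun v hv => (ha' v hv).trans (ha v hv)⟩
end Dyn
section MainInduction
variable {A : Type*} [Fintype A] [DecidableEq A]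

theorem walk_end_frozen {g : A → (A → Bool) → Bool} {v : A}
    (hfroz : ∀ x, g v x = x v) :
    ∀ {b w : A} {p : Bool}, PW (ig g) b w p → w = v → b = v := by
  intro b w p h
  induction h with
  | refl => exact id
  | @cons a b' c s p harc hw ih =>
      intro hcv
      have hbv : b' = v := ih hcv
      subst hbv
      exact (frozen_arc hfroz harc).1

theorem mainInduction (W : Finset A) :
    ∀ (g : A → (A → Bool) → Bool),
      (∀ v, v ∉ W → ∀ x, g v x = x v) →
      (∀ v ∈ W, ∀ x y, (∀ u ∈ W, x u = y u) → g v x = g v y) →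
      (∀ u v, ig g u v Sign.neg → ∀ p, ¬ PW (ig g) v u p) →
      ∀ S, IsAttractor g S → ∃ x, S = {x} ∧ IsFixedPoint g x := by
  classical
  induction W using Finset.strongInduction with
  | _ W IH =>
  intro g hfroz hdep hdag S hS
  obtain ⟨x₀, hx₀⟩ := hS.1.1
  by_cases hWe : W = ∅
  · subst hWe
    have hfix : ∀ v, g v x₀ = x₀ v := fun v => hfroz v (by simp) x₀
    obtain ⟨h1, h2⟩ := attractor_of_fixed hS hx₀ hfix
    exact ⟨x₀, h1, h2⟩
  · set Good : A → Prop :=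
      fun v => ¬ ∃ a b p, ig g a b Sign.neg ∧ PW (ig g) b v p with hGoodDef
    -- frozen vertices are good
    have hF1 : ∀ v, v ∉ W → Good v := by
      intro v hv hbad
      obtain ⟨a, b, p, harc, hw⟩ := hbad
      have hbv : b = v := walk_end_frozen (hfroz v hv) hw rfl
      rw [hbv] at harc
      exact absurd (frozen_arc (hfroz v hv) harc).2 (by decide)
    -- goodness propagates backwards along arcs, and arcs into good are positive
    have hGclose : ∀ u v s, ig g u v s → Good v → Good u ∧ s ≠ Sign.neg := by
      intro u v s harc hgv
      constructor
      · intro hbad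
        obtain ⟨a, b, p, hnarc, hw⟩ := hbad
        exact hgv ⟨a, b, _, hnarc, hw.trans (PW.single harc)⟩
      · intro hs
        subst hs
        exact hgv ⟨u, v, false, harc, PW.refl v⟩
    -- good vertices depend only on good coordinates
    have hGdep : ∀ v, Good v → ∀ x y, (∀ u, Good u → x u = y u) → g v x = g v y := by
      intro v hgv x y hagree
      by_contra hne
      obtain ⟨u, s, hu, hs⟩ := exists_arc_of_ne Finset.univ x y (fun _ _ => by simp) hne
      exact hu (hagree u (hGclose u v s hs hgv).1)
    -- good vertices are monotone
    have hGmono : ∀ v, Good v → ∀ x y, (∀ u, x u ≤ y u) → g v x ≤ g v y := by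
      intro v hgv x y hle
      refine mono_of_no_neg_arc (fun u hc => ?_) Finset.univ x y (fun _ _ => by simp) hle
      exact (hGclose u v Sign.neg hc hgv).2 rfl
    -- there is a good active vertex
    have hgoodW : ∃ v ∈ W, Good v := by
      by_contra hng
      push_neg at hng
      have hch : ∀ v, v ∈ W → ∃ ab : A × A,
          ig g ab.1 ab.2 Sign.neg ∧ ∃ p, PW (ig g) ab.2 v p := by
        intro v hv
        have h2 := hng v hv
        simp only [hGoodDef, not_not] at h2
        obtain ⟨a, b, p, harc, hw⟩ := h2
        exact ⟨(a, b), harc, p, hw⟩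
      set FB : A → A × A := fun v => if h : v ∈ W then (hch v h).choose else (v, v)
        with hFBdef
      have hFBarc : ∀ v ∈ W, ig g (FB v).1 (FB v).2 Sign.neg := by
        intro v hv; simp only [hFBdef, dif_pos hv]; exact (hch v hv).choose_spec.1
      have hFBw : ∀ v (hv : v ∈ W), ∃ p, PW (ig g) (FB v).2 v p := by
        intro v hv; simp only [hFBdef, dif_pos hv]; exact (hch v hv).choose_spec.2
      have hFB2W : ∀ v ∈ W, (FB v).2 ∈ W := by
        intro v hv
        by_contra hc
        exact absurd (frozen_arc (hfroz _ hc) (hFBarc v hv)).2 (by decide)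
      have hFB1W : ∀ v ∈ W, (FB v).1 ∈ W := by
        intro v hv
        exact arc_mem_of_dep (hdep _ (hFB2W v hv)) (hFBarc v hv)
      obtain ⟨v₀, hv₀⟩ := Finset.nonempty_iff_ne_empty.mpr hWe
      set vseq : ℕ → A := fun k => (fun v => (FB v).1)^[k] v₀ with hvseqdef
      have hvseqW : ∀ k, vseq k ∈ W := by
        intro k
        induction k with
        | zero => exact hv₀
        | succ k ih =>
            simp only [hvseqdef]
            rw [Function.iterate_succ_apply']
            exact hFB1W _ (by simpa [hvseqdef] using ih)
      have hvsucc : ∀ k, vseq (k + 1) = (FB (vseq k)).1 := by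
        intro k
        simp only [hvseqdef]
        rw [Function.iterate_succ_apply']
      have claim : ∀ k j, j ≤ k → ∃ q, PW (ig g) ((FB (vseq k)).2) (vseq (k - j)) q := by
        intro k j
        induction j with
        | zero => intro _; simpa using hFBw (vseq k) (hvseqW k)
        | succ j ihj =>
            intro hjk
            obtain ⟨q, hq⟩ := ihj (by omega)
            have hkj : k - j = (k - (j + 1)) + 1 := by omega
            rw [hkj, hvsucc] at hq
            obtain ⟨q', hq'⟩ := hFBw (vseq (k - (j + 1))) (hvseqW _)
            exact ⟨_, (hq.trans (PW.single (hFBarc _ (hvseqW _)))).trans hq'⟩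
      obtain ⟨i, j, hij, heq⟩ := Fintype.exists_ne_map_eq_of_card_lt
        (fun i : Fin (Fintype.card A + 1) => vseq i) (by simp)
      have key : ∀ (m n : ℕ), m < n → vseq m = vseq n → False := by
        intro m n hmn hveq
        obtain ⟨q, hq⟩ := claim (n - 1) ((n - 1) - m) (by omega)
        have hii : n - 1 - (n - 1 - m) = m := by omega
        rw [hii, hveq] at hq
        have harc : ig g (vseq ((n - 1) + 1)) ((FB (vseq (n - 1))).2) Sign.neg := by
          rw [hvsucc]
          exact hFBarc _ (hvseqW _)
        have hn : (n - 1) + 1 = n := by omega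
        rw [hn] at harc
        exact hdag _ _ harc q hq
      rcases Nat.lt_or_ge (i : ℕ) (j : ℕ) with hlt | hge
      · exact key i j hlt heq
      · have hlt' : (j : ℕ) < (i : ℕ) := by
          rcases Nat.lt_or_ge (j : ℕ) (i : ℕ) with h | h
          · exact h
          · exact absurd (Fin.ext (by omega)) hij
        exact key j i hlt' heq.symm
    -- equilibrate the good part inside S
    obtain ⟨y₁, hry₁, hy₁⟩ := phase1 (g := g) (Good := Good)
      (Finset.univ.filter fun v => Good v ∧ x₀ v = false).card x₀ le_rfl
    obtain ⟨z, hrz, hz⟩ := phase2 (g := g) (Good := Good) hGmono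
      (Finset.univ.filter fun v => Good v ∧ y₁ v = true).card y₁ hy₁ le_rfl
    have hzS : z ∈ S := mem_of_reach hS.1 hx₀ (hry₁.trans hrz)
    have hall : ∀ x ∈ S, (∀ v, Good v → g v x = x v) ∧ (∀ v, Good v → x v = z v) := by
      intro x hx
      exact equil_reach hGdep (attractor_reach hS hzS x hx) hz
    -- the reduced network
    set ov : (A → Bool) → (A → Bool) :=
      fun x u => if Good u then z u else x u with hovdef
    set h' : A → (A → Bool) → Bool :=
      fun v x => if Good v then x v else g v (ov x) with h'def
    have hW'ss : W.filter (fun v => ¬ Good v) ⊂ W := by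
      rw [Finset.ssubset_iff_of_subset (Finset.filter_subset _ _)]
      obtain ⟨v, hvW, hvg⟩ := hgoodW
      refine ⟨v, hvW, ?_⟩
      simp only [Finset.mem_filter, not_and, not_not]
      exact fun _ => hvg
    have hfroz' : ∀ v, v ∉ W.filter (fun v => ¬ Good v) → ∀ x, h' v x = x v := by
      intro v hv x
      have hgv : Good v := by
        by_cases hvW : v ∈ W
        · by_contra hng
          exact hv (Finset.mem_filter.mpr ⟨hvW, fun hgood => hgood hng⟩)
        · exact hF1 v hvW
      simp only [h'def]
      exact if_pos hgv
    have hdep' : ∀ v ∈ W.filter (fun v => ¬ Good v), ∀ x y,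
        (∀ u ∈ W.filter (fun v => ¬ Good v), x u = y u) → h' v x = h' v y := by
      intro v hv x y hagree
      obtain ⟨hvW, hvg⟩ := Finset.mem_filter.mp hv
      simp only [h'def]
      rw [if_neg hvg, if_neg hvg]
      apply hdep v hvW
      intro u huW
      simp only [hovdef]
      by_cases hgu : Good u
      · rw [if_pos hgu, if_pos hgu]
      · rw [if_neg hgu, if_neg hgu]
        exact hagree u (Finset.mem_filter.mpr ⟨huW, hgu⟩)
    have hfrozGood' : ∀ v, Good v → ∀ x, h' v x = x v := by
      intro v hgv x
      simp only [h'def]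
      exact if_pos hgv
    have harcLift : ∀ u v s, ig h' u v s → ¬ Good v → ¬ Good u ∧ ig g u v s := by
      intro u v s harc hgv
      have hngu : ¬ Good u := by
        intro hgu
        have hkey : ∀ (x : A → Bool) (c : Bool), ov (Function.update x u c) = ov x := by
          intro x c
          funext w
          simp only [hovdef]
          by_cases hgw : Good w
          · rw [if_pos hgw, if_pos hgw]
          · rw [if_neg hgw, if_neg hgw]
            have hwu' : w ≠ u := fun hc => hgw (by rw [hc]; exact hgu)
            exact Function.update_of_ne hwu' _ _
        rcases s with _ | _ <;> obtain ⟨x, hx⟩ := harc <;>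
          · simp only [h'def] at hx
            simp only [if_neg hgv] at hx
            rw [hkey x, hkey x] at hx
            exact absurd hx (lt_irrefl _)
      refine ⟨hngu, ?_⟩
      have hkey : ∀ (x : A → Bool) (c : Bool),
          ov (Function.update x u c) = Function.update (ov x) u c := by
        intro x c
        funext w
        simp only [hovdef]
        by_cases hwu : w = u
        · subst hwu
          rw [if_neg hngu, Function.update_self, Function.update_self]
        · rw [Function.update_of_ne hwu, Function.update_of_ne hwu]
      rcases s with _ | _ <;> obtain ⟨x, hx⟩ := harc <;>
        · simp only [h'def] at hx
          simp only [if_neg hgv] at hx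
          rw [hkey x, hkey x] at hx
          exact ⟨ov x, hx⟩
    have hwalkLift : ∀ {a c : A} {p : Bool}, PW (ig h') a c p → ¬ Good a →
        ∃ q, PW (ig g) a c q := by
      intro a c p h
      induction h with
      | refl => exact fun _ => ⟨false, PW.refl _⟩
      | @cons a' b' c' s p harc hw ih =>
          intro hga
          by_cases hgb : Good b'
          · exact absurd ((frozen_arc (hfrozGood' b' hgb) harc).1 ▸ hgb) hga
          · obtain ⟨q, hq⟩ := ih hgb
            obtain ⟨hnu, harcg⟩ := harcLift a' b' s harc hgb
            exact ⟨_, (PW.single harcg).trans hq⟩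
    have hdag' : ∀ u v, ig h' u v Sign.neg → ∀ p, ¬ PW (ig h') v u p := by
      intro u v harc p hw
      by_cases hgv : Good v
      · exact absurd (frozen_arc (hfrozGood' v hgv) harc).2 (by decide)
      · obtain ⟨hngu, harcg⟩ := harcLift u v Sign.neg harc hgv
        obtain ⟨q, hq⟩ := hwalkLift hw hgv
        exact hdag u v harcg q hq
    -- h' agrees with g on S
    have hagreeS : ∀ x ∈ S, ∀ v, h' v x = g v x := by
      intro x hx v
      obtain ⟨hequil, hzagree⟩ := hall x hx
      have hovx : ov x = x := by
        funext u
        simp only [hovdef]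
        by_cases hgu : Good u
        · simp only [if_pos hgu]
          exact (hzagree u hgu).symm
        · simp [hgu]
      simp only [h'def]
      by_cases hgv : Good v
      · simp only [if_pos hgv]
        exact (hequil v hgv).symm
      · simp only [if_neg hgv, hovx]
    have hstepIff : ∀ x ∈ S, ∀ y, asyncStep h' x y ↔ asyncStep g x y := by
      intro x hx y
      constructor
      · rintro ⟨v, hne, rfl⟩
        exact ⟨v, by rw [← hagreeS x hx v]; exact hne, by rw [hagreeS x hx v]⟩
      · rintro ⟨v, hne, rfl⟩
        exact ⟨v, by rw [hagreeS x hx v]; exact hne, by rw [hagreeS x hx v]⟩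
    have hS' : IsAttractor h' S := by
      refine ⟨⟨⟨x₀, hx₀⟩, ?_⟩, ?_⟩
      · intro x hx y hstep
        exact hS.1.2 x hx y ((hstepIff x hx y).mp hstep)
      · intro T hT hTsub
        refine hS.2 T ⟨hT.1, ?_⟩ hTsub
        intro x hx y hstep
        exact hT.2 x hx y ((hstepIff x (hTsub hx) y).mpr hstep)
    obtain ⟨xs, hSxs, hfixs⟩ := IH _ hW'ss h' hfroz' hdep' hdag' S hS'
    have hxsS : xs ∈ S := by rw [hSxs]; rfl
    refine ⟨xs, hSxs, funext fun v => ?_⟩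
    show g v xs = xs v
    rw [← hagreeS xs hxsS v]
    exact congrFun hfixs v
end MainInduction
section Glue
variable {A : Type*} [Fintype A] [DecidableEq A]

def tau (σ : A → Bool) (x : A → Bool) : A → Bool := fun u => xor (σ u) (x u)

theorem tau_tau (σ : A → Bool) (x : A → Bool) : tau σ (tau σ x) = x := by
  funext u
  show xor (σ u) (xor (σ u) (x u)) = x u
  rcases σ u <;> rcases x u <;> rfl

def swi (σ : A → Bool) (f : A → (A → Bool) → Bool) : A → (A → Bool) → Bool :=
  fun v x => xor (σ v) (f v (tau σ x))

theorem tau_update (σ : A → Bool) (x : A → Bool) (u : A) (b : Bool) :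
    tau σ (Function.update x u b) = Function.update (tau σ x) u (xor (σ u) b) := by
  funext w
  by_cases hw : w = u
  · subst hw
    show xor (σ w) (Function.update x w b w) = _
    rw [Function.update_self, Function.update_self]
  · show xor (σ w) (Function.update x u b w) = _
    rw [Function.update_of_ne hw, Function.update_of_ne hw]
    rfl

theorem swi_update (σ : A → Bool) (f : A → (A → Bool) → Bool) (v u : A)
    (x : A → Bool) (b : Bool) :
    swi σ f v (Function.update x u b)
      = xor (σ v) (f v (Function.update (tau σ x) u (xor (σ u) b))) := by
  show xor (σ v) (f v (tau σ (Function.update x u b))) = _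
  rw [tau_update]

theorem ig_swi_to {σ : A → Bool} {f : A → (A → Bool) → Bool} {u v : A} {s : Sign}
    (h : ig (swi σ f) u v s) :
    ∃ s', ig f u v s' ∧
      xor (decide (s = Sign.neg)) (decide (s' = Sign.neg)) = xor (σ u) (σ v) := by
  rcases s <;> obtain ⟨x, hx⟩ := h <;>
    rw [swi_update, swi_update] at hx <;>
    rcases hσu : σ u <;> rcases hσv : σ v <;> rw [hσu, hσv] at hx <;>
    simp only [Bool.false_xor, Bool.true_xor, Bool.not_false, Bool.not_true] at hx <;>
    rcases hd0 : f v (Function.update (tau σ x) u false) <;>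
      rcases hd1 : f v (Function.update (tau σ x) u true) <;>
    rw [hd0, hd1] at hx <;>
    first
      | exact absurd hx (by decide)
      | exact ⟨Sign.pos, ⟨tau σ x, by rw [hd0, hd1]; decide⟩, by decide⟩
      | exact ⟨Sign.neg, ⟨tau σ x, by rw [hd0, hd1]; decide⟩, by decide⟩

theorem pw_swi_to {σ : A → Bool} {f : A → (A → Bool) → Bool} {a c : A} {p : Bool}
    (h : PW (ig (swi σ f)) a c p) : ∃ q, PW (ig f) a c q := by
  induction h with
  | refl => exact ⟨false, PW.refl _⟩
  | @cons a' b' c' s p harc hw ih =>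
      obtain ⟨q, hq⟩ := ih
      obtain ⟨s', harcf, _⟩ := ig_swi_to harc
      exact ⟨_, (PW.single harcf).trans hq⟩

theorem step_swi {σ : A → Bool} {f : A → (A → Bool) → Bool} {x y : A → Bool} :
    asyncStep (swi σ f) x y ↔ asyncStep f (tau σ x) (tau σ y) := by
  have hxor1 : ∀ a b c : Bool, xor a b ≠ c → b ≠ xor a c := by decide
  have hxor2 : ∀ a b c : Bool, b ≠ xor a c → xor a b ≠ c := by decide
  have hxor3 : ∀ a b : Bool, xor a (xor a b) = b := by decide
  constructor
  · rintro ⟨v, hne, rfl⟩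
    refine ⟨v, hxor1 _ _ _ hne, ?_⟩
    rw [tau_update]
    exact congrArg (Function.update (tau σ x) v) (hxor3 (σ v) (f v (tau σ x)))
  · rintro ⟨v, hne, heq⟩
    refine ⟨v, hxor2 _ _ _ hne, ?_⟩
    have := congrArg (tau σ) heq
    rw [tau_tau, tau_update] at this
    rw [this, tau_tau]
    rfl

theorem attr_swi {σ : A → Bool} {f : A → (A → Bool) → Bool} {S : Set (A → Bool)}
    (hS : IsAttractor f S) : IsAttractor (swi σ f) {x | tau σ x ∈ S} := by
  constructor
  · constructor
    · obtain ⟨x₀, hx₀⟩ := hS.1.1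
      refine ⟨tau σ x₀, ?_⟩
      show tau σ (tau σ x₀) ∈ S
      rw [tau_tau]; exact hx₀
    · intro x hx y hstep
      exact hS.1.2 _ hx _ (step_swi.mp hstep)
  · intro T hT hTsub
    have hT' : IsTrapSet f {x | tau σ x ∈ T} := by
      constructor
      · obtain ⟨t₀, ht₀⟩ := hT.1
        refine ⟨tau σ t₀, ?_⟩
        show tau σ (tau σ t₀) ∈ T
        rw [tau_tau]; exact ht₀
      · intro x hx y hstep
        refine hT.2 _ hx _ ?_
        rw [step_swi, tau_tau, tau_tau]
        exact hstep
    have hsub' : {x | tau σ x ∈ T} ⊆ S := by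
      intro x hx
      have h2 := hTsub hx
      show x ∈ S
      rw [← tau_tau σ x]
      exact h2
    have hTS := hS.2 _ hT' hsub'
    apply Set.Subset.antisymm hTsub
    intro x hx
    have : tau σ x ∈ {y | tau σ y ∈ T} := by rw [← hTS] at hx; exact hx
    show x ∈ T
    rw [← tau_tau σ x]
    exact this
end Glue

/-- if the influence graph has no negative cycle, every attractor
of the asynchronous STG is a fixed point. -/
theorem stmt9 {A : Type*} [Fintype A] [DecidableEq A]
    (f : A → (A → Bool) → Bool) (h : NoNegCycle (ig f)) :
    ∀ S, IsAttractor f S → ∃ x, S = {x} ∧ IsFixedPoint f x := by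
  classical
  intro S hS
  have hNN : ∀ a, ¬ PW (ig f) a a true := noNegCycle_no_odd_closed h
  have hdag : ∀ u v, ig (swi (sig (ig f)) f) u v Sign.neg →
      ∀ p, ¬ PW (ig (swi (sig (ig f)) f)) v u p := by
    intro u v harc p hw
    obtain ⟨s', harcf, hpar⟩ := ig_swi_to harc
    obtain ⟨q, hq⟩ := pw_swi_to hw
    have hsig := sig_arc hNN harcf ⟨q, hq⟩
    rw [hsig] at hpar
    revert hpar
    rcases hbu : sig (ig f) u <;> rcases hbv : sig (ig f) v <;> decide
  have hattr := attr_swi (σ := sig (ig f)) hS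
  obtain ⟨xs, hSxs, hfix⟩ := mainInduction (Finset.univ : Finset A)
    (swi (sig (ig f)) f)
    (fun v hv => absurd (Finset.mem_univ v) hv)
    (fun v _ x y hagree => by
      have hxy : x = y := funext fun u => hagree u (Finset.mem_univ u)
      rw [hxy])
    hdag _ hattr
  refine ⟨tau (sig (ig f)) xs, ?_, ?_⟩
  · ext y
    constructor
    · intro hy
      have hmem : tau (sig (ig f)) y ∈ {x | tau (sig (ig f)) x ∈ S} := by
        show tau (sig (ig f)) (tau (sig (ig f)) y) ∈ S
        rw [tau_tau]
        exact hy
      rw [hSxs] at hmem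
      have heq := Set.eq_of_mem_singleton hmem
      have := congrArg (tau (sig (ig f))) heq
      rw [tau_tau] at this
      exact this
    · intro hy
      rw [Set.mem_singleton_iff] at hy
      subst hy
      have : xs ∈ {x | tau (sig (ig f)) x ∈ S} := by rw [hSxs]; rfl
      exact this
  · have hxor : ∀ a b c : Bool, xor a b = c → b = xor a c := by decide
    funext v
    have hfv : xor (sig (ig f) v) (f v (tau (sig (ig f)) xs)) = xs v :=
      congrFun hfix v
    exact hxor _ _ _ hfv
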